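/- Let H be a 16-vertex C4-free Halin graph with characteristic tree T. Then every path in T has length at most 6. -/

import Mathlib

open SimpleGraph

/-- Degree of a vertex as the `ncard` of its neighbour set. -/
noncomputable def ncDeg {V : Type*} (G : SimpleGraph V) (v : V) : ℕ :=
  (G.neighborSet v).ncard

/-- A leaf is a vertex of degree one. -/
def IsLeaf {V : Type*} (G : SimpleGraph V) (v : V) : Prop :=
  ncDeg G v = 1

/-- A Halin graph, presented by its characteristic tree `T` and outer cycle `C`.
The underlying graph is `T ⊔ C`.  The outer cycle is a `2`-regular connected graph
whose support is exactly the set of leaves of `T`, every non-leaf of `T` has degree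
at least three, and the cycle is compatible with a planar embedding: for every edge
`uv` of `T`, the leaves lying in each component of `T - uv` are consecutive on the
cycle, i.e. they induce a connected subgraph of the cycle. -/
structure HalinGraph (V : Type*) [Fintype V] : Type _ where
  /-- the characteristic tree -/
  T : SimpleGraph V
  /-- the outer cycle -/
  C : SimpleGraph V
  tree_isTree : T.IsTree
  four_le_card : 4 ≤ Fintype.card V
  nonleaf_degree : ∀ v : V, ¬ IsLeaf T v → 3 ≤ ncDeg T v
  support_C : C.support = {v : V | IsLeaf T v}
  two_regular : ∀ v ∈ C.support, ncDeg C v = 2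
  cycle_connected : (C.induce C.support).Connected
  planar : ∀ u v : V, T.Adj u v →
    (C.induce {x : V | IsLeaf T x ∧ (T.deleteEdges {s(u, v)}).Reachable u x}).Connected

/-- The Halin graph itself: the (edge-disjoint) union of the tree and the outer cycle. -/
def HalinGraph.graph {V : Type*} [Fintype V] (H : HalinGraph V) : SimpleGraph V :=
  H.T ⊔ H.C

/-- Number of edges of a graph. -/
noncomputable def eCount {V : Type*} (G : SimpleGraph V) : ℕ :=
  G.edgeSet.ncard

/-- A graph is `C₄`-free iff it contains no cycle of length `4`. -/
def C4Free {V : Type*} (G : SimpleGraph V) : Prop :=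
  ∀ (v : V) (w : G.Walk v v), w.IsCycle → w.length ≠ 4

/-- A semi-branching vertex of the characteristic tree: a non-leaf with at least one
leaf neighbour and at least two non-leaf neighbours. -/
def SemiBranching {V : Type*} (T : SimpleGraph V) (v : V) : Prop :=
  ¬ IsLeaf T v ∧ (∃ x, T.Adj v x ∧ IsLeaf T x) ∧
    ∃ x y : V, x ≠ y ∧ T.Adj v x ∧ T.Adj v y ∧ ¬ IsLeaf T x ∧ ¬ IsLeaf T y

/-! ### Auxiliary lemmas -/

namespace HalinAux

variable {V : Type*}

lemma reach_closed {G : SimpleGraph V} {S : Set V}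
    (hS : ∀ a b, a ∈ S → G.Adj a b → b ∈ S) {x y : V}
    (h : G.Reachable x y) (hx : x ∈ S) : y ∈ S := by
  obtain ⟨w⟩ := h
  revert hx
  induction w with
  | nil => exact fun h => h
  | cons hadj p ih => exact fun hx => ih (hS _ _ hx hadj)

lemma crossing {G : SimpleGraph V} (P : V → Prop) {x y : V}
    (h : G.Reachable x y) : P x → ¬ P y →
    ∃ a b, G.Adj a b ∧ P a ∧ ¬ P b := by
  obtain ⟨w⟩ := h
  induction w with
  | nil => exact fun hx hy => absurd hx hy
  | @cons u c _ hadj p ih =>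
    intro hx hy
    by_cases hc : P c
    · exact ih hc hy
    · exact ⟨u, c, hadj, hx, hc⟩

lemma tree_bridge {T : SimpleGraph V} (ht : T.IsAcyclic) {a b : V} (hab : T.Adj a b) :
    ¬ (T.deleteEdges {s(a,b)}).Reachable a b := by
  have h := (isAcyclic_iff_forall_adj_isBridge.mp ht) hab
  rw [isBridge_iff] at h
  exact h

lemma sym2_ne {a b c d : V} (h : ¬((a = c ∧ b = d) ∨ (a = d ∧ b = c))) :
    s(a,b) ≠ s(c,d) := by
  rw [Ne, Sym2.eq_iff]; exact h

lemma getVert_mem_support {G : SimpleGraph V} {u w : V} (p : G.Walk u w) (i : ℕ) :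
    p.getVert i ∈ p.support := by
  induction p generalizing i with
  | nil => simp [Walk.getVert]
  | cons h q ih =>
    cases i with
    | zero => simp [Walk.getVert]
    | succ i => simpa [Walk.support_cons, Walk.getVert] using Or.inr (ih i)

lemma getVert_inj {G : SimpleGraph V} {u w : V} {p : G.Walk u w} (hp : p.IsPath) :
    ∀ i j, i ≤ p.length → j ≤ p.length → p.getVert i = p.getVert j → i = j := by
  induction p with
  | nil => intro i j hi hj _; simp [Walk.length_nil] at hi hj; omega
  | cons h q ih =>
    rw [Walk.cons_isPath_iff] at hp
    intro i j hi hj hij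
    match i, j with
    | 0, 0 => rfl
    | 0, j+1 =>
      exfalso
      simp only [Walk.getVert_cons_succ, Walk.getVert_zero] at hij
      exact hp.2 (by rw [hij]; exact getVert_mem_support q j)
    | i+1, 0 =>
      exfalso
      simp only [Walk.getVert_cons_succ, Walk.getVert_zero] at hij
      exact hp.2 (by rw [← hij]; exact getVert_mem_support q i)
    | i+1, j+1 =>
      simp only [Walk.getVert_cons_succ] at hij
      have := ih hp.1 i j (by simpa using hi) (by simpa using hj) hij
      omega

lemma c4_of_adj {G : SimpleGraph V} {a b c d : V}
    (h1 : G.Adj a b) (h2 : G.Adj b c) (h3 : G.Adj c d) (h4 : G.Adj d a)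
    (hac : a ≠ c) (hbd : b ≠ d) (hfree : C4Free G) : False := by
  have hab := h1.ne
  have hbc := h2.ne
  have hcd := h3.ne
  have hda := h4.ne
  refine hfree a (Walk.cons h1 (Walk.cons h2 (Walk.cons h3 (Walk.cons h4 Walk.nil)))) ?_ (by simp)
  rw [Walk.isCycle_def]
  refine ⟨?_, by simp, ?_⟩
  · rw [Walk.isTrail_def]
    simp only [Walk.edges_cons, Walk.edges_nil, List.nodup_cons, List.mem_cons,
      List.not_mem_nil, or_false, List.nodup_nil, and_true, Sym2.eq, Sym2.rel_iff',
      Prod.mk.injEq, Prod.swap_prod_mk]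
    push_neg
    refine ⟨⟨⟨?_,?_⟩,⟨?_,?_⟩,⟨?_,?_⟩⟩,⟨⟨?_,?_⟩,⟨?_,?_⟩⟩,⟨?_,?_⟩⟩ <;> tauto
  · simp only [Walk.support_cons, Walk.support_nil, List.tail_cons, List.nodup_cons,
      List.mem_cons, List.not_mem_nil, or_false, List.nodup_nil, and_true]
    push_neg
    exact ⟨⟨hbc, hbd, fun h => hab h.symm⟩, ⟨hcd, fun h => hac h.symm⟩, hda,
      trivial⟩

lemma not_leaf_of_two [Finite V] {G : SimpleGraph V} {x a b : V} (ha : G.Adj x a)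
    (hb : G.Adj x b) (hab : a ≠ b) : ¬ IsLeaf G x := by
  intro h
  have h2 : 1 < (G.neighborSet x).ncard := by
    rw [Set.one_lt_ncard (Set.toFinite _)]
    exact ⟨a, ha, b, hb, hab⟩
  rw [IsLeaf, ncDeg] at h
  omega

lemma leaf_unique_nbr {G : SimpleGraph V} {x a b : V} (h : IsLeaf G x) (ha : G.Adj x a)
    (hb : G.Adj x b) : a = b := by
  rw [IsLeaf, ncDeg, Set.ncard_eq_one] at h
  obtain ⟨c, hc⟩ := h
  have h1 : a ∈ G.neighborSet x := ha
  have h2 : b ∈ G.neighborSet x := hb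
  rw [hc, Set.mem_singleton_iff] at h1 h2
  rw [h1, h2]

/-- The spine edges of an eight-vertex path. -/
def spineEdges (v : ℕ → V) : Set (Sym2 V) := {e | ∃ k, k < 7 ∧ e = s(v k, v (k+1))}

/-- Component of `v i` after deleting all spine edges. -/
def Kcomp (T : SimpleGraph V) (v : ℕ → V) (i : ℕ) : Set V :=
  {x | (T.deleteEdges (spineEdges v)).Reachable (v i) x}

variable {T : SimpleGraph V} {v : ℕ → V}

lemma spine_mem {x y : V} (h : s(x,y) ∈ spineEdges v) :
    ∃ k, k < 7 ∧ ((x = v k ∧ y = v (k+1)) ∨ (x = v (k+1) ∧ y = v k)) := by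
  obtain ⟨k, hk, he⟩ := h
  rw [Sym2.eq_iff] at he
  exact ⟨k, hk, he⟩

lemma chain_reach (HA : ∀ i, i < 7 → T.Adj (v i) (v (i+1))) {D : Set (Sym2 V)}
    {m n : ℕ} (hmn : m ≤ n) (hn : n ≤ 7)
    (hD : ∀ j, m ≤ j → j < n → s(v j, v (j+1)) ∉ D) :
    (T.deleteEdges D).Reachable (v m) (v n) := by
  induction n, hmn using Nat.le_induction with
  | base => exact Reachable.refl _
  | succ n hmn ih =>
    have h1 := ih (by omega) (fun j hj hj2 => hD j hj (by omega))
    have h2 : (T.deleteEdges D).Adj (v n) (v (n+1)) := by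
      rw [deleteEdges_adj]
      exact ⟨HA n (by omega), hD n hmn (by omega)⟩
    exact h1.trans h2.reachable

lemma K_not_reach (hT : T.IsAcyclic) (HA : ∀ i, i < 7 → T.Adj (v i) (v (i+1)))
    (HN : ∀ i j, i ≤ 7 → j ≤ 7 → i ≠ j → v i ≠ v j) {i j : ℕ} (hj : j ≤ 7) (hij : i < j) :
    ¬ (T.deleteEdges (spineEdges v)).Reachable (v i) (v j) := by
  intro h
  have hi7 : i < 7 := lt_of_lt_of_le hij hj
  have hsub : ({s(v i, v (i+1))} : Set (Sym2 V)) ⊆ spineEdges v := by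
    rw [Set.singleton_subset_iff]
    exact ⟨i, hi7, rfl⟩
  have h1 : (T.deleteEdges {s(v i, v (i+1))}).Reachable (v i) (v j) :=
    h.mono (deleteEdges_anti hsub)
  have h2 : (T.deleteEdges {s(v i, v (i+1))}).Reachable (v (i+1)) (v j) := by
    refine chain_reach HA (by omega) hj ?_
    intro k hk1 hk2 hmem
    rw [Set.mem_singleton_iff, Sym2.eq_iff] at hmem
    rcases hmem with ⟨h1', _⟩ | ⟨h1', h2'⟩
    · exact HN k i (by omega) (by omega) (by omega) h1'
    · exact HN (k+1) i (by omega) (by omega) (by omega) h2'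
  exact tree_bridge hT (HA i hi7) (h1.trans h2.symm)

lemma K_disjoint (hT : T.IsAcyclic) (HA : ∀ i, i < 7 → T.Adj (v i) (v (i+1)))
    (HN : ∀ i j, i ≤ 7 → j ≤ 7 → i ≠ j → v i ≠ v j) {i j : ℕ}
    (hi : i ≤ 7) (hj : j ≤ 7) (hij : i ≠ j) :
    Disjoint (Kcomp T v i) (Kcomp T v j) := by
  rw [Set.disjoint_left]
  rintro x hxi hxj
  rcases lt_or_gt_of_ne hij with h | h
  · exact K_not_reach hT HA HN hj h (hxi.trans hxj.symm)
  · exact K_not_reach hT HA HN hi h (hxj.trans hxi.symm)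

lemma reach_all (hT : T.IsTree) (x : V) : ∃ i, i ≤ 7 ∧ x ∈ Kcomp T v i := by
  have hreach : T.Reachable (v 0) x := hT.isConnected.preconnected _ _
  show x ∈ {y : V | ∃ i, i ≤ 7 ∧ y ∈ Kcomp T v i}
  refine reach_closed ?_ hreach
    (⟨0, by omega, Reachable.refl _⟩ : (v 0) ∈ {y : V | ∃ i, i ≤ 7 ∧ y ∈ Kcomp T v i})
  rintro a b ⟨i, hi, ha⟩ hab
  by_cases he : s(a, b) ∈ spineEdges v
  · obtain ⟨k, hk, hc⟩ := spine_mem he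
    rcases hc with ⟨_, rfl⟩ | ⟨_, rfl⟩
    · exact ⟨k+1, by omega, Reachable.refl _⟩
    · exact ⟨k, by omega, Reachable.refl _⟩
  · exact ⟨i, hi, ha.trans (SimpleGraph.Adj.reachable (by rw [deleteEdges_adj]; exact ⟨hab, he⟩))⟩

section Mid

variable [Finite V]

lemma prev_adj (HA : ∀ i, i < 7 → T.Adj (v i) (v (i+1))) {i : ℕ}
    (h1 : 1 ≤ i) (h7 : i ≤ 7) : T.Adj (v i) (v (i-1)) := by
  have h := HA (i-1) (by omega)
  rw [Nat.sub_add_cancel h1] at h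
  exact h.symm

lemma mid_not_leaf (HA : ∀ i, i < 7 → T.Adj (v i) (v (i+1)))
    (HN : ∀ i j, i ≤ 7 → j ≤ 7 → i ≠ j → v i ≠ v j) {i : ℕ}
    (h1 : 1 ≤ i) (h6 : i ≤ 6) : ¬ IsLeaf T (v i) :=
  not_leaf_of_two (prev_adj HA h1 (by omega)) (HA i (by omega))
    (fun h => HN (i-1) (i+1) (by omega) (by omega) (by omega) h)

lemma extra_nbr_pre (HA : ∀ i, i < 7 → T.Adj (v i) (v (i+1)))
    (HN : ∀ i j, i ≤ 7 → j ≤ 7 → i ≠ j → v i ≠ v j)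
    (hdeg : ∀ u, ¬ IsLeaf T u → 3 ≤ ncDeg T u)
    {i : ℕ} (h1 : 1 ≤ i) (h6 : i ≤ 6) :
    ∃ u, T.Adj (v i) u ∧ u ≠ v (i-1) ∧ u ≠ v (i+1) ∧ u ∈ Kcomp T v i := by
  have h3 : 3 ≤ (T.neighborSet (v i)).ncard := hdeg _ (mid_not_leaf HA HN h1 h6)
  have hns : ¬ (T.neighborSet (v i) ⊆ {v (i-1), v (i+1)}) := by
    intro hsub
    have hle := Set.ncard_le_ncard hsub (Set.toFinite _)
    have h2 : ({v (i-1), v (i+1)} : Set V).ncard ≤ 2 :=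
      (Set.ncard_insert_le _ _).trans (by simp)
    omega
  obtain ⟨u, hu, hu2⟩ := Set.not_subset.mp hns
  simp only [Set.mem_insert_iff, Set.mem_singleton_iff, not_or] at hu2
  have hadj : T.Adj (v i) u := hu
  refine ⟨u, hadj, hu2.1, hu2.2, ?_⟩
  refine Adj.reachable ?_
  rw [deleteEdges_adj]
  refine ⟨hadj, ?_⟩
  intro hmem
  obtain ⟨k, hk, hc⟩ := spine_mem hmem
  rcases hc with ⟨hvi, hu'⟩ | ⟨hvi, hu'⟩
  · have hik : i = k := by
      by_contra hne; exact HN i k (by omega) (by omega) hne hvi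
    exact hu2.2 (by rw [hu', hik])
  · have hik : i = k+1 := by
      by_contra hne; exact HN i (k+1) (by omega) (by omega) hne hvi
    exact hu2.1 (by rw [hu', hik]; norm_num)

lemma K_struct {i : ℕ} (h1 : 1 ≤ i) (h6 : i ≤ 6)
    (hgood : ∀ u, T.Adj (v i) u → u = v (i-1) ∨ u = v (i+1) ∨ IsLeaf T u) :
    Kcomp T v i ⊆ ({v i} ∪ {x | T.Adj (v i) x ∧ IsLeaf T x}) := by
  intro x hx
  have hx' : (T.deleteEdges (spineEdges v)).Reachable (v i) x := hx
  refine reach_closed ?_ hx' (Or.inl rfl)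
  rintro a b (rfl | ⟨hadj, hleaf⟩) hab
  · rw [deleteEdges_adj] at hab
    obtain ⟨hTab, hnot⟩ := hab
    rcases hgood b hTab with rfl | rfl | hleaf
    · exact absurd ⟨i-1, by omega,
        by rw [Sym2.eq_iff]; exact Or.inr ⟨by rw [Nat.sub_add_cancel h1], rfl⟩⟩ hnot
    · exact absurd ⟨i, by omega, rfl⟩ hnot
    · exact Or.inr ⟨hTab, hleaf⟩
  · rw [deleteEdges_adj] at hab
    exact Or.inl (leaf_unique_nbr hleaf hab.1 hadj.symm)

lemma K0_struct (HA : ∀ i, i < 7 → T.Adj (v i) (v (i+1)))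
    (hleaf0 : IsLeaf T (v 0)) : Kcomp T v 0 ⊆ {v 0} := by
  intro x hx
  have hx' : (T.deleteEdges (spineEdges v)).Reachable (v 0) x := hx
  refine reach_closed ?_ hx' rfl
  rintro a b rfl hab
  rw [deleteEdges_adj] at hab
  have hb : b = v 1 := leaf_unique_nbr hleaf0 hab.1 (HA 0 (by omega))
  exact absurd ⟨0, by omega, by rw [hb]⟩ hab.2

end Mid

/-- The "good left end" condition. -/
def GoodL (T : SimpleGraph V) (v : ℕ → V) : Prop :=
  IsLeaf T (v 0) ∧ (∀ u, T.Adj (v 1) u → u = v 0 ∨ u = v 2 ∨ IsLeaf T u) ∧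
    (∀ u, T.Adj (v 2) u → u = v 1 ∨ u = v 3 ∨ IsLeaf T u)

end HalinAux
namespace HalinAux

lemma kill {V : Type*} [Fintype V] (H : HalinGraph V) (hfree : C4Free H.graph)
    {v : ℕ → V} (HA : ∀ i, i < 7 → H.T.Adj (v i) (v (i+1)))
    (HN : ∀ i j, i ≤ 7 → j ≤ 7 → i ≠ j → v i ≠ v j)
    (hgood : GoodL H.T v) : False := by
  obtain ⟨hleaf0, hgood1, hgood2⟩ := hgood
  have hT := H.tree_isTree
  have hacyc : H.T.IsAcyclic := hT.IsAcyclic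
  have hTg : ∀ {a b : V}, H.T.Adj a b → H.graph.Adj a b := fun h => by
    rw [HalinGraph.graph, sup_adj]; exact Or.inl h
  have hCg : ∀ {a b : V}, H.C.Adj a b → H.graph.Adj a b := fun h => by
    rw [HalinGraph.graph, sup_adj]; exact Or.inr h
  obtain ⟨u2, hu2adj, hu2p, hu2n, hu2K⟩ :=
    extra_nbr_pre HA HN H.nonleaf_degree (i := 2) (by omega) (by omega)
  norm_num at hu2p hu2n
  have hu2leaf : IsLeaf H.T u2 := by
    rcases hgood2 u2 hu2adj with h | h | h
    · exact absurd h hu2p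
    · exact absurd h hu2n
    · exact h
  set S3 : Set V := {x : V | IsLeaf H.T x ∧ (H.T.deleteEdges {s(v 2, v 3)}).Reachable (v 2) x}
    with hS3def
  have hconn : (H.C.induce S3).Connected :=
    H.planar (v 2) (v 3) (by simpa using HA 2 (by omega))
  have hu2S : u2 ∈ S3 := by
    refine ⟨hu2leaf, Adj.reachable ?_⟩
    rw [deleteEdges_adj]
    refine ⟨hu2adj, ?_⟩
    rw [Set.mem_singleton_iff]
    refine sym2_ne ?_
    rintro (⟨_, h⟩ | ⟨h, _⟩)
    · exact hu2n h
    · exact HN 2 3 (by omega) (by omega) (by omega) h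
  have hv0S : v 0 ∈ S3 := by
    refine ⟨hleaf0, ?_⟩
    have e1 : (H.T.deleteEdges {s(v 2, v 3)}).Adj (v 2) (v 1) := by
      rw [deleteEdges_adj]
      refine ⟨(show H.T.Adj (v 1) (v 2) by simpa using HA 1 (by omega)).symm, ?_⟩
      rw [Set.mem_singleton_iff]
      refine sym2_ne ?_
      rintro (⟨_, h⟩ | ⟨h, _⟩)
      · exact HN 1 3 (by omega) (by omega) (by omega) h
      · exact HN 2 3 (by omega) (by omega) (by omega) h
    have e2 : (H.T.deleteEdges {s(v 2, v 3)}).Adj (v 1) (v 0) := by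
      rw [deleteEdges_adj]
      refine ⟨(show H.T.Adj (v 0) (v 1) by simpa using HA 0 (by omega)).symm, ?_⟩
      rw [Set.mem_singleton_iff]
      refine sym2_ne ?_
      rintro (⟨h, _⟩ | ⟨h, _⟩)
      · exact HN 1 2 (by omega) (by omega) (by omega) h
      · exact HN 1 3 (by omega) (by omega) (by omega) h
    exact e1.reachable.trans e2.reachable
  have hnadj20 : ¬ H.T.Adj (v 2) (v 0) := by
    intro hadj
    apply tree_bridge hacyc hadj
    have e1 : (H.T.deleteEdges {s(v 2, v 0)}).Adj (v 2) (v 1) := by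
      rw [deleteEdges_adj]
      refine ⟨(show H.T.Adj (v 1) (v 2) by simpa using HA 1 (by omega)).symm, ?_⟩
      rw [Set.mem_singleton_iff]
      refine sym2_ne ?_
      rintro (⟨_, h⟩ | ⟨h, _⟩)
      · exact HN 1 0 (by omega) (by omega) (by omega) h
      · exact HN 2 0 (by omega) (by omega) (by omega) h
    have e2 : (H.T.deleteEdges {s(v 2, v 0)}).Adj (v 1) (v 0) := by
      rw [deleteEdges_adj]
      refine ⟨(show H.T.Adj (v 0) (v 1) by simpa using HA 0 (by omega)).symm, ?_⟩
      rw [Set.mem_singleton_iff]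
      refine sym2_ne ?_
      rintro (⟨h, _⟩ | ⟨h, _⟩)
      · exact HN 1 2 (by omega) (by omega) (by omega) h
      · exact HN 1 0 (by omega) (by omega) (by omega) h
    exact e1.reachable.trans e2.reachable
  obtain ⟨A, B, hABadj, hPA, hPB⟩ :=
    crossing (fun z : ↥S3 => H.T.Adj (v 2) ↑z)
      (hconn.preconnected ⟨u2, hu2S⟩ ⟨v 0, hv0S⟩) hu2adj hnadj20
  have hCadj : H.C.Adj ↑A ↑B := hABadj
  obtain ⟨i, hi, hBK⟩ := reach_all (v := v) hT (↑B : V)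
  have hBleaf : IsLeaf H.T (↑B : V) := B.2.1
  have hBreach : (H.T.deleteEdges {s(v 2, v 3)}).Reachable (v 2) ↑B := B.2.2
  have hsub23 : ({s(v 2, v 3)} : Set (Sym2 V)) ⊆ spineEdges v := by
    rw [Set.singleton_subset_iff]
    exact ⟨2, by omega, by norm_num⟩
  have hi2 : i ≤ 2 := by
    by_contra hgt
    push_neg at hgt
    have h1 : (H.T.deleteEdges {s(v 2, v 3)}).Reachable (v i) ↑B :=
      hBK.mono (deleteEdges_anti hsub23)
    have h2 : (H.T.deleteEdges {s(v 2, v 3)}).Reachable (v 3) (v i) := by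
      refine chain_reach HA (by omega) hi ?_
      intro k hk1 hk2 hmem
      rw [Set.mem_singleton_iff] at hmem
      refine sym2_ne ?_ hmem
      rintro (⟨h, _⟩ | ⟨_, h⟩)
      · exact HN k 2 (by omega) (by omega) (by omega) h
      · exact HN (k+1) 2 (by omega) (by omega) (by omega) h
    exact tree_bridge hacyc (show H.T.Adj (v 2) (v 3) by simpa using HA 2 (by omega))
      ((hBreach.trans h1.symm).trans h2.symm)
  have hcase : (↑B : V) = v 0 ∨ H.T.Adj (v 1) ↑B := by
    interval_cases i
    · exact Or.inl (K0_struct HA hleaf0 hBK)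
    · have h := K_struct (v := v) (i := 1) (by omega) (by omega)
        (fun u hu => by simpa using hgood1 u hu) hBK
      rcases h with h | h
      · exact absurd hBleaf (by
          rw [show (↑B : V) = v 1 from h]
          exact mid_not_leaf HA HN (i := 1) (by omega) (by omega))
      · exact Or.inr h.1
    · have h := K_struct (v := v) (i := 2) (by omega) (by omega)
        (fun u hu => by simpa using hgood2 u hu) hBK
      rcases h with h | h
      · exact absurd hBleaf (by
          rw [show (↑B : V) = v 2 from h]
          exact mid_not_leaf HA HN (i := 2) (by omega) (by omega))
      · exact absurd h.1 hPB
  rcases hcase with hB0 | hB1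
  · refine c4_of_adj (G := H.graph) (a := v 0) (b := v 1) (c := v 2) (d := (↑A : V))
      (hTg (by simpa using HA 0 (by omega))) (hTg (by simpa using HA 1 (by omega)))
      (hTg hPA) (hCg (by rw [← hB0]; exact hCadj)) ?_ ?_ hfree
    · exact HN 0 2 (by omega) (by omega) (by omega)
    · intro h
      exact mid_not_leaf HA HN (i := 1) (by omega) (by omega) (by rw [h]; exact A.2.1)
  · refine c4_of_adj (G := H.graph) (a := (↑B : V)) (b := v 1) (c := v 2) (d := (↑A : V))
      (hTg hB1.symm) (hTg (by simpa using HA 1 (by omega))) (hTg hPA) (hCg hCadj) ?_ ?_ hfree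
    · intro h
      exact mid_not_leaf HA HN (i := 2) (by omega) (by omega) (by rw [← h]; exact hBleaf)
    · intro h
      exact mid_not_leaf HA HN (i := 1) (by omega) (by omega) (by rw [h]; exact A.2.1)

end HalinAux
namespace HalinAux

variable {V : Type*} {T : SimpleGraph V} {v : ℕ → V}

lemma edge_not_spine (HN : ∀ i j, i ≤ 7 → j ≤ 7 → i ≠ j → v i ≠ v j)
    {i : ℕ} {u : V} (hi : i ≤ 7) (hup : i = 0 ∨ u ≠ v (i-1)) (hun : i = 7 ∨ u ≠ v (i+1)) :
    s(v i, u) ∉ spineEdges v := by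
  intro hmem
  obtain ⟨k, hk, hc⟩ := spine_mem hmem
  rcases hc with ⟨hvi, hu'⟩ | ⟨hvi, hu'⟩
  · have hik : i = k := by
      by_contra hne; exact HN i k (by omega) (by omega) hne hvi
    rcases hun with h7 | hne
    · omega
    · exact hne (by rw [hu', hik])
  · have hik : i = k+1 := by
      by_contra hne; exact HN i (k+1) (by omega) (by omega) hne hvi
    rcases hup with h0 | hne
    · omega
    · exact hne (by rw [hu', hik]; norm_num)

lemma nbr_in_K (HN : ∀ i j, i ≤ 7 → j ≤ 7 → i ≠ j → v i ≠ v j)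
    {i : ℕ} {u : V} (hi : i ≤ 7) (hu : T.Adj (v i) u)
    (hup : i = 0 ∨ u ≠ v (i-1)) (hun : i = 7 ∨ u ≠ v (i+1)) :
    u ∈ Kcomp T v i := by
  refine Adj.reachable ?_
  rw [deleteEdges_adj]
  exact ⟨hu, edge_not_spine HN hi hup hun⟩

lemma not_on_spine (hT : T.IsAcyclic) (HA : ∀ i, i < 7 → T.Adj (v i) (v (i+1)))
    (HN : ∀ i j, i ≤ 7 → j ≤ 7 → i ≠ j → v i ≠ v j)
    {i : ℕ} {u : V} (hi : i ≤ 7) (hu : T.Adj (v i) u) (huK : u ∈ Kcomp T v i) :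
    ∀ j, j ≤ 7 → u ≠ v j := by
  intro j hj huj
  by_cases hij : i = j
  · exact hu.ne' (by rw [huj, hij])
  · have : v j ∈ Kcomp T v i := huj ▸ huK
    exact Set.disjoint_left.mp (K_disjoint hT HA HN hi hj hij) this (Reachable.refl _)

lemma two_more [Finite V] (hdeg : ∀ u, ¬ IsLeaf T u → 3 ≤ ncDeg T u)
    {x y : V} (hxy : T.Adj x y) (hnl : ¬ IsLeaf T x) :
    ∃ z1 z2, z1 ≠ z2 ∧ z1 ≠ y ∧ z2 ≠ y ∧ T.Adj x z1 ∧ T.Adj x z2 := by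
  have h3 : 3 ≤ (T.neighborSet x).ncard := hdeg x hnl
  have hy : y ∈ T.neighborSet x := hxy
  have hone : 1 < (T.neighborSet x \ {y}).ncard := by
    have := Set.ncard_diff_singleton_add_one hy (Set.toFinite _)
    omega
  rw [Set.one_lt_ncard (Set.toFinite _)] at hone
  obtain ⟨z1, hz1, z2, hz2, h12⟩ := hone
  obtain ⟨hz1n, hz1e⟩ := hz1
  obtain ⟨hz2n, hz2e⟩ := hz2
  exact ⟨z1, z2, h12, by simpa using hz1e, by simpa using hz2e, hz1n, hz2n⟩

lemma K_two [Finite V] (HA : ∀ i, i < 7 → T.Adj (v i) (v (i+1)))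
    (HN : ∀ i j, i ≤ 7 → j ≤ 7 → i ≠ j → v i ≠ v j)
    (hdeg : ∀ u, ¬ IsLeaf T u → 3 ≤ ncDeg T u)
    {i : ℕ} (h1 : 1 ≤ i) (h6 : i ≤ 6) :
    ∃ A : Set V, A ⊆ Kcomp T v i ∧ A.ncard = 2 := by
  obtain ⟨u, hu, hup, hun, huK⟩ := extra_nbr_pre HA HN hdeg h1 h6
  refine ⟨{v i, u}, ?_, Set.ncard_pair hu.ne⟩
  rintro x (rfl | rfl)
  · exact Reachable.refl _
  · exact huK

lemma K_three0 [Finite V] (HA : ∀ i, i < 7 → T.Adj (v i) (v (i+1)))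
    (HN : ∀ i j, i ≤ 7 → j ≤ 7 → i ≠ j → v i ≠ v j)
    (hdeg : ∀ u, ¬ IsLeaf T u → 3 ≤ ncDeg T u)
    (hnl : ¬ IsLeaf T (v 0)) :
    ∃ A : Set V, A ⊆ Kcomp T v 0 ∧ A.ncard = 3 := by
  obtain ⟨z1, z2, h12, h1n, h2n, hz1, hz2⟩ := two_more hdeg (HA 0 (by omega)) hnl
  refine ⟨{v 0, z1, z2}, ?_, ?_⟩
  · rintro x (rfl | rfl | rfl)
    · exact Reachable.refl _
    · exact nbr_in_K HN (by omega) hz1 (Or.inl rfl) (Or.inr h1n)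
    · exact nbr_in_K HN (by omega) hz2 (Or.inl rfl) (Or.inr h2n)
  · rw [Set.ncard_insert_of_notMem (by simp [hz1.ne, hz2.ne]) (Set.toFinite _),
      Set.ncard_pair h12]

lemma K_four [Finite V] (hT : T.IsAcyclic) (HA : ∀ i, i < 7 → T.Adj (v i) (v (i+1)))
    (HN : ∀ i j, i ≤ 7 → j ≤ 7 → i ≠ j → v i ≠ v j)
    (hdeg : ∀ u, ¬ IsLeaf T u → 3 ≤ ncDeg T u)
    {i : ℕ} (h1 : 1 ≤ i) (h6 : i ≤ 6) {u : V} (hu : T.Adj (v i) u)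
    (hup : u ≠ v (i-1)) (hun : u ≠ v (i+1)) (hunl : ¬ IsLeaf T u) :
    ∃ A : Set V, A ⊆ Kcomp T v i ∧ A.ncard = 4 := by
  have huK : u ∈ Kcomp T v i := nbr_in_K HN (by omega) hu (Or.inr hup) (Or.inr hun)
  have hns := not_on_spine hT HA HN (by omega) hu huK
  obtain ⟨z1, z2, h12, h1n, h2n, hz1, hz2⟩ := two_more hdeg hu.symm hunl
  have hz1K : z1 ∈ Kcomp T v i := by
    refine Reachable.trans huK (Adj.reachable ?_)
    rw [deleteEdges_adj]
    refine ⟨hz1, ?_⟩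
    intro hmem
    obtain ⟨k, hk, hc⟩ := spine_mem hmem
    rcases hc with ⟨h, _⟩ | ⟨h, _⟩
    · exact hns k (by omega) h
    · exact hns (k+1) (by omega) h
  have hz2K : z2 ∈ Kcomp T v i := by
    refine Reachable.trans huK (Adj.reachable ?_)
    rw [deleteEdges_adj]
    refine ⟨hz2, ?_⟩
    intro hmem
    obtain ⟨k, hk, hc⟩ := spine_mem hmem
    rcases hc with ⟨h, _⟩ | ⟨h, _⟩
    · exact hns k (by omega) h
    · exact hns (k+1) (by omega) h
  refine ⟨{v i, u, z1, z2}, ?_, ?_⟩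
  · rintro x (rfl | rfl | rfl | rfl)
    · exact Reachable.refl _
    · exact huK
    · exact hz1K
    · exact hz2K
  · rw [Set.ncard_insert_of_notMem
        (by simp only [Set.mem_insert_iff, Set.mem_singleton_iff, not_or]
            exact ⟨hu.ne, fun h => h1n h.symm, fun h => h2n h.symm⟩) (Set.toFinite _),
      Set.ncard_insert_of_notMem
        (by simp only [Set.mem_insert_iff, Set.mem_singleton_iff, not_or]
            exact ⟨hz1.ne, hz2.ne⟩) (Set.toFinite _),
      Set.ncard_pair h12]

lemma badL_count [Finite V] (hT : T.IsAcyclic) (HA : ∀ i, i < 7 → T.Adj (v i) (v (i+1)))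
    (HN : ∀ i j, i ≤ 7 → j ≤ 7 → i ≠ j → v i ≠ v j)
    (hdeg : ∀ u, ¬ IsLeaf T u → 3 ≤ ncDeg T u)
    (hbad : ¬ GoodL T v) :
    ∃ A0 A1 A2 : Set V, A0 ⊆ Kcomp T v 0 ∧ A1 ⊆ Kcomp T v 1 ∧ A2 ⊆ Kcomp T v 2 ∧
      7 ≤ A0.ncard + A1.ncard + A2.ncard := by
  by_cases hL0 : IsLeaf T (v 0)
  · by_cases hL1 : ∀ u, T.Adj (v 1) u → u = v 0 ∨ u = v 2 ∨ IsLeaf T u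
    · by_cases hL2 : ∀ u, T.Adj (v 2) u → u = v 1 ∨ u = v 3 ∨ IsLeaf T u
      · exact absurd ⟨hL0, hL1, hL2⟩ hbad
      · push_neg at hL2
        obtain ⟨u, hu, hu1, hu3, hunl⟩ := hL2
        obtain ⟨A2, hA2, hA2c⟩ := K_four hT HA HN hdeg (i := 2) (by omega) (by omega) hu
          (by norm_num; exact hu1) (by norm_num; exact hu3) hunl
        obtain ⟨A1, hA1, hA1c⟩ := K_two HA HN hdeg (i := 1) (by omega) (by omega)
        refine ⟨{v 0}, A1, A2, ?_, hA1, hA2, by rw [Set.ncard_singleton]; omega⟩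
        rintro x rfl
        exact Reachable.refl _
    · push_neg at hL1
      obtain ⟨u, hu, hu0, hu2, hunl⟩ := hL1
      obtain ⟨A1, hA1, hA1c⟩ := K_four hT HA HN hdeg (i := 1) (by omega) (by omega) hu
        (by norm_num; exact hu0) (by norm_num; exact hu2) hunl
      obtain ⟨A2, hA2, hA2c⟩ := K_two HA HN hdeg (i := 2) (by omega) (by omega)
      refine ⟨{v 0}, A1, A2, ?_, hA1, hA2, by rw [Set.ncard_singleton]; omega⟩
      rintro x rfl
      exact Reachable.refl _
  · obtain ⟨A0, hA0, hA0c⟩ := K_three0 HA HN hdeg hL0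
    obtain ⟨A1, hA1, hA1c⟩ := K_two HA HN hdeg (i := 1) (by omega) (by omega)
    obtain ⟨A2, hA2, hA2c⟩ := K_two HA HN hdeg (i := 2) (by omega) (by omega)
    exact ⟨A0, A1, A2, hA0, hA1, hA2, by omega⟩

lemma spine_rev (v : ℕ → V) : spineEdges (fun i => v (7 - i)) = spineEdges v := by
  ext e
  simp only [spineEdges, Set.mem_setOf_eq]
  constructor
  · rintro ⟨k, hk, rfl⟩
    refine ⟨6 - k, by omega, ?_⟩
    have h1 : 7 - (k+1) = 6 - k := by omega
    have h2 : 6 - k + 1 = 7 - k := by omega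
    simp only [h1, h2]
    exact Sym2.eq_swap
  · rintro ⟨k, hk, rfl⟩
    refine ⟨6 - k, by omega, ?_⟩
    have h1 : 7 - (6 - k) = k + 1 := by omega
    have h2 : 7 - (6 - k + 1) = k := by omega
    simp only [h1, h2]
    exact Sym2.eq_swap

lemma Kcomp_rev (T : SimpleGraph V) (v : ℕ → V) (i : ℕ) :
    Kcomp T (fun j => v (7 - j)) i = Kcomp T v (7 - i) := by
  simp only [Kcomp, spine_rev]

end HalinAux
namespace HalinAux

variable {V : Type*} {T : SimpleGraph V} {v : ℕ → V}

lemma count_contra [Fintype V] (hcard : Fintype.card V = 16) (hT : T.IsAcyclic)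
    (HA : ∀ i, i < 7 → T.Adj (v i) (v (i+1)))
    (HN : ∀ i j, i ≤ 7 → j ≤ 7 → i ≠ j → v i ≠ v j) (S : ℕ → Set V)
    (hsub : ∀ i, i ≤ 7 → S i ⊆ Kcomp T v i)
    (htot : 18 ≤ (S 0).ncard + (S 1).ncard + (S 2).ncard + (S 3).ncard + (S 4).ncard +
      (S 5).ncard + (S 6).ncard + (S 7).ncard) : False := by
  have d : ∀ i j, i ≤ 7 → j ≤ 7 → i ≠ j → Disjoint (S i) (S j) := fun i j hi hj hij =>
    (K_disjoint hT HA HN hi hj hij).mono (hsub i hi) (hsub j hj)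
  have h7 : (S 6 ∪ S 7).ncard = (S 6).ncard + (S 7).ncard :=
    Set.ncard_union_eq (d 6 7 (by omega) (by omega) (by omega)) (Set.toFinite _) (Set.toFinite _)
  have h6 : (S 5 ∪ (S 6 ∪ S 7)).ncard = (S 5).ncard + (S 6 ∪ S 7).ncard :=
    Set.ncard_union_eq (Set.disjoint_union_right.mpr
      ⟨d 5 6 (by omega) (by omega) (by omega), d 5 7 (by omega) (by omega) (by omega)⟩)
      (Set.toFinite _) (Set.toFinite _)
  have h5 : (S 4 ∪ (S 5 ∪ (S 6 ∪ S 7))).ncard = (S 4).ncard + (S 5 ∪ (S 6 ∪ S 7)).ncard :=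
    Set.ncard_union_eq (Set.disjoint_union_right.mpr
      ⟨d 4 5 (by omega) (by omega) (by omega), Set.disjoint_union_right.mpr
        ⟨d 4 6 (by omega) (by omega) (by omega), d 4 7 (by omega) (by omega) (by omega)⟩⟩)
      (Set.toFinite _) (Set.toFinite _)
  have h4 : (S 3 ∪ (S 4 ∪ (S 5 ∪ (S 6 ∪ S 7)))).ncard
      = (S 3).ncard + (S 4 ∪ (S 5 ∪ (S 6 ∪ S 7))).ncard :=
    Set.ncard_union_eq (Set.disjoint_union_right.mpr
      ⟨d 3 4 (by omega) (by omega) (by omega), Set.disjoint_union_right.mpr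
        ⟨d 3 5 (by omega) (by omega) (by omega), Set.disjoint_union_right.mpr
          ⟨d 3 6 (by omega) (by omega) (by omega), d 3 7 (by omega) (by omega) (by omega)⟩⟩⟩)
      (Set.toFinite _) (Set.toFinite _)
  have h3 : (S 2 ∪ (S 3 ∪ (S 4 ∪ (S 5 ∪ (S 6 ∪ S 7))))).ncard
      = (S 2).ncard + (S 3 ∪ (S 4 ∪ (S 5 ∪ (S 6 ∪ S 7)))).ncard :=
    Set.ncard_union_eq (Set.disjoint_union_right.mpr
      ⟨d 2 3 (by omega) (by omega) (by omega), Set.disjoint_union_right.mpr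
        ⟨d 2 4 (by omega) (by omega) (by omega), Set.disjoint_union_right.mpr
          ⟨d 2 5 (by omega) (by omega) (by omega), Set.disjoint_union_right.mpr
            ⟨d 2 6 (by omega) (by omega) (by omega),
              d 2 7 (by omega) (by omega) (by omega)⟩⟩⟩⟩)
      (Set.toFinite _) (Set.toFinite _)
  have h2 : (S 1 ∪ (S 2 ∪ (S 3 ∪ (S 4 ∪ (S 5 ∪ (S 6 ∪ S 7)))))).ncard
      = (S 1).ncard + (S 2 ∪ (S 3 ∪ (S 4 ∪ (S 5 ∪ (S 6 ∪ S 7))))).ncard :=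
    Set.ncard_union_eq (Set.disjoint_union_right.mpr
      ⟨d 1 2 (by omega) (by omega) (by omega), Set.disjoint_union_right.mpr
        ⟨d 1 3 (by omega) (by omega) (by omega), Set.disjoint_union_right.mpr
          ⟨d 1 4 (by omega) (by omega) (by omega), Set.disjoint_union_right.mpr
            ⟨d 1 5 (by omega) (by omega) (by omega), Set.disjoint_union_right.mpr
              ⟨d 1 6 (by omega) (by omega) (by omega),
                d 1 7 (by omega) (by omega) (by omega)⟩⟩⟩⟩⟩)
      (Set.toFinite _) (Set.toFinite _)
  have h1 : (S 0 ∪ (S 1 ∪ (S 2 ∪ (S 3 ∪ (S 4 ∪ (S 5 ∪ (S 6 ∪ S 7))))))).ncard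
      = (S 0).ncard + (S 1 ∪ (S 2 ∪ (S 3 ∪ (S 4 ∪ (S 5 ∪ (S 6 ∪ S 7)))))).ncard :=
    Set.ncard_union_eq (Set.disjoint_union_right.mpr
      ⟨d 0 1 (by omega) (by omega) (by omega), Set.disjoint_union_right.mpr
        ⟨d 0 2 (by omega) (by omega) (by omega), Set.disjoint_union_right.mpr
          ⟨d 0 3 (by omega) (by omega) (by omega), Set.disjoint_union_right.mpr
            ⟨d 0 4 (by omega) (by omega) (by omega), Set.disjoint_union_right.mpr
              ⟨d 0 5 (by omega) (by omega) (by omega), Set.disjoint_union_right.mpr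
                ⟨d 0 6 (by omega) (by omega) (by omega),
                  d 0 7 (by omega) (by omega) (by omega)⟩⟩⟩⟩⟩⟩)
      (Set.toFinite _) (Set.toFinite _)
  have hle : (S 0 ∪ (S 1 ∪ (S 2 ∪ (S 3 ∪ (S 4 ∪ (S 5 ∪ (S 6 ∪ S 7))))))).ncard ≤ 16 := by
    have := Set.ncard_le_ncard (Set.subset_univ
      (S 0 ∪ (S 1 ∪ (S 2 ∪ (S 3 ∪ (S 4 ∪ (S 5 ∪ (S 6 ∪ S 7)))))))) (Set.toFinite _)
    rwa [Set.ncard_univ, Nat.card_eq_fintype_card, hcard] at this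
  omega

end HalinAux

open HalinAux in
/-- In a `16`-vertex `C₄`-free Halin graph, every path of the characteristic tree has
length at most `6`. -/
theorem halin_sixteen_path_le_six {V : Type*} [Fintype V]
    (hcard : Fintype.card V = 16) (H : HalinGraph V) (hfree : C4Free H.graph) :
    ∀ (a b : V) (p : H.T.Walk a b), p.IsPath → p.length ≤ 6 := by
  intro a b p hpath
  by_contra hlen
  push_neg at hlen
  have hT := H.tree_isTree
  have hacyc : H.T.IsAcyclic := hT.IsAcyclic
  set v : ℕ → V := p.getVert with hv
  have HA : ∀ i, i < 7 → H.T.Adj (v i) (v (i+1)) := fun i hi =>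
    p.adj_getVert_succ (by omega)
  have HN : ∀ i j, i ≤ 7 → j ≤ 7 → i ≠ j → v i ≠ v j := fun i j hi hj hij h =>
    hij (getVert_inj hpath i j (by omega) (by omega) h)
  set w : ℕ → V := fun i => v (7 - i) with hw
  have HAw : ∀ i, i < 7 → H.T.Adj (w i) (w (i+1)) := by
    intro i hi
    have h := HA (6-i) (by omega)
    have h2 : 6 - i + 1 = 7 - i := by omega
    rw [h2] at h
    have h3 : 7 - (i+1) = 6 - i := by omega
    show H.T.Adj (v (7-i)) (v (7-(i+1)))
    rw [h3]
    exact h.symm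
  have HNw : ∀ i j, i ≤ 7 → j ≤ 7 → i ≠ j → w i ≠ w j := fun i j hi hj hij =>
    HN (7-i) (7-j) (by omega) (by omega) (by omega)
  by_cases hGL : GoodL H.T v
  · exact kill H hfree HA HN hGL
  by_cases hGR : GoodL H.T w
  · exact kill H hfree HAw HNw hGR
  obtain ⟨A0, A1, A2, hA0, hA1, hA2, hAcard⟩ := badL_count hacyc HA HN H.nonleaf_degree hGL
  obtain ⟨B0, B1, B2, hB0, hB1, hB2, hBcard⟩ := badL_count hacyc HAw HNw H.nonleaf_degree hGR
  rw [hw, Kcomp_rev] at hB0 hB1 hB2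
  norm_num at hB0 hB1 hB2
  obtain ⟨A3, hA3, hA3c⟩ := K_two HA HN H.nonleaf_degree (i := 3) (by omega) (by omega)
  obtain ⟨A4, hA4, hA4c⟩ := K_two HA HN H.nonleaf_degree (i := 4) (by omega) (by omega)
  set S : ℕ → Set V := fun i =>
    match i with
    | 0 => A0 | 1 => A1 | 2 => A2 | 3 => A3 | 4 => A4 | 5 => B2 | 6 => B1 | 7 => B0
    | _ => ∅ with hS
  refine count_contra hcard hacyc HA HN S ?_ ?_
  · intro i hi
    interval_cases i
    · exact hA0
    · exact hA1
    · exact hA2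
    · exact hA3
    · exact hA4
    · exact hB2
    · exact hB1
    · exact hB0
  · show 18 ≤ A0.ncard + A1.ncard + A2.ncard + A3.ncard + A4.ncard +
      B2.ncard + B1.ncard + B0.ncard
    omega
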